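/- Let k be a perfect field of characteristic p > 0 and q = p^e with e ≥ 1. There is no polynomial β ∈ k[x] satisfying β^{q+1} + x^{p^t} β − 1 = 0 in k[x], for any t ≥ 0, provided that when t > 0 the polynomial β is not a p-th power in k[x]. Consequently, the equation α^{q+1} + x α − 1 = 0 has no solution α in the perfect closure k[x]^{1/p^∞} of k[x]. -/
import Mathlib


open Polynomial

/-- Let `k` be a perfect field of characteristic `p > 0` and `q = p ^ e`, `e ≥ 1`.
(1) There is no polynomial `β ∈ k[x]` with `β^(q+1) + x^(p^t) * β - 1 = 0` (for any `t ≥ 0`,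
provided `β` is not a `p`-th power when `t > 0`).
(2) Consequently, `α^(q+1) + x * α - 1 = 0` has no solution `α` in the perfect closure
`k[x]^{1/p^∞}` of `k[x]`. -/
theorem stmt6 (k : Type*) [Field k] (p : ℕ) [Fact p.Prime] [CharP k p] [PerfectRing k p]
    (e : ℕ) (he : 1 ≤ e) :
    (∀ (t : ℕ) (β : Polynomial k), (0 < t → ∀ γ : Polynomial k, β ≠ γ ^ p) →
        β ^ (p ^ e + 1) + X ^ (p ^ t) * β - 1 ≠ 0) ∧
    (∀ α : PerfectClosure (Polynomial k) p,
        α ^ (p ^ e + 1) + PerfectClosure.of (Polynomial k) p X * α - 1 ≠ 0) := by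
  have hp : p.Prime := Fact.out
  have hq2 : 2 ≤ p ^ e := by
    calc 2 ≤ p := hp.two_le
    _ = p ^ 1 := (pow_one p).symm
    _ ≤ p ^ e := Nat.pow_le_pow_right hp.pos he
  have key : ∀ (t : ℕ) (β : Polynomial k), (0 < t → ∀ γ : Polynomial k, β ≠ γ ^ p) →
      β ^ (p ^ e + 1) + X ^ (p ^ t) * β - 1 ≠ 0 := by
    intro t β hβ h
    have heq : β ^ (p ^ e + 1) + X ^ (p ^ t) * β = 1 := sub_eq_zero.mp h
    have hβ0 : β ≠ 0 := by
      rintro rfl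
      simp at heq
    rcases Nat.eq_zero_or_pos t with rfl | ht
    · -- t = 0 : degree argument
      rw [pow_zero, pow_one] at heq
      rcases Nat.eq_zero_or_pos β.natDegree with hd | hd
      · -- β is a nonzero constant
        obtain ⟨c, rfl⟩ : ∃ c, β = C c := ⟨β.coeff 0, eq_C_of_natDegree_eq_zero hd⟩
        have hc := congrArg (fun f => coeff f 1) heq
        simp [← map_pow, coeff_C, coeff_X_mul, coeff_one] at hc
        exact hβ0 (by rw [hc, map_zero])
      · have h1 : (X * β).natDegree < (β ^ (p ^ e + 1)).natDegree := by
          rw [natDegree_pow, natDegree_mul X_ne_zero hβ0, natDegree_X]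
          nlinarith
        have h2 := natDegree_add_eq_left_of_natDegree_lt h1
        rw [heq, natDegree_one, natDegree_pow] at h2
        have : 0 < (p ^ e + 1) * β.natDegree := Nat.mul_pos (by omega) hd
        omega
    · -- t > 0 : derivative argument
      have hq1 : ((p ^ e + 1 : ℕ) : k) = 1 := by
        push_cast [CharP.cast_eq_zero k p]
        rw [zero_pow (by omega : e ≠ 0)]
        ring
      have hpt : ((p ^ t : ℕ) : k) = 0 := by
        push_cast [CharP.cast_eq_zero k p]
        exact zero_pow (by omega : t ≠ 0)
      have hder := congrArg derivative heq
      rw [derivative_one, derivative_add, derivative_mul, derivative_pow, derivative_X_pow,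
        hq1, hpt, map_one, map_zero, Nat.add_sub_cancel] at hder
      have hder' : derivative β * (β ^ (p ^ e) + X ^ (p ^ t)) = 0 := by
        rw [← hder]; ring
      have hne : β ^ (p ^ e) + X ^ (p ^ t) ≠ 0 := by
        intro h0
        have h1 : (1 : Polynomial k) = 0 := by
          rw [← heq, pow_succ]
          linear_combination β * h0
        simp at h1
      have hderiv : derivative β = 0 := by
        rcases mul_eq_zero.mp hder' with h' | h'
        · exact h'
        · exact absurd h' hne
      refine hβ ht ((contract p β).map ((frobeniusEquiv k p).symm : k →+* k)) ?_
      rw [← polynomial_expand_eq, expand_contract p hderiv hp.ne_zero]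
  refine ⟨key, ?_⟩
  intro α h
  classical
  have hα : α ^ (p ^ e + 1) + PerfectClosure.of (Polynomial k) p X * α = 1 := sub_eq_zero.mp h
  have hP : ∃ n : ℕ, ∃ β : Polynomial k, PerfectClosure.mk (Polynomial k) p (n, β) = α := by
    obtain ⟨⟨n, β⟩, hmk⟩ := PerfectClosure.mk_surjective (K := Polynomial k) (p := p) α
    exact ⟨n, β, hmk⟩
  set t := Nat.find hP with ht_def
  obtain ⟨β, hβ⟩ := Nat.find_spec hP
  -- α ^ (p ^ t) = of β
  have hfrob : α ^ (p ^ t) = PerfectClosure.of (Polynomial k) p β := by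
    rw [← hβ, ← PerfectClosure.iterate_frobenius_mk (Polynomial k) p t β,
      iterate_frobenius]
  -- raise the equation to the p^t power
  have h2 : (PerfectClosure.of (Polynomial k) p) (β ^ (p ^ e + 1) + X ^ (p ^ t) * β - 1) = 0 := by
    have h3 := congrArg (· ^ (p ^ t)) hα
    simp only [one_pow] at h3
    rw [add_pow_char_pow, mul_pow, ← pow_mul, mul_comm (p ^ e + 1) (p ^ t), pow_mul,
      hfrob] at h3
    rw [map_sub, map_add, map_mul, map_pow, map_pow, map_one, sub_eq_zero]
    rw [← h3]
  -- transfer to Polynomial k via injectivity of `of`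
  have h4 : β ^ (p ^ e + 1) + X ^ (p ^ t) * β - 1 = 0 := by
    have h5 : PerfectClosure.mk (Polynomial k) p (0, β ^ (p ^ e + 1) + X ^ (p ^ t) * β - 1)
        = PerfectClosure.mk (Polynomial k) p (0, 0) := by
      rw [← PerfectClosure.of_apply, h2, ← PerfectClosure.mk_zero_right (Polynomial k) p 0]
    have := (PerfectClosure.eq_iff (Polynomial k) p _ _).mp h5
    simpa using this
  refine key t β ?_ h4
  intro ht γ hγ
  have h6 : t - 1 + 1 = t := by omega
  have h7 := PerfectClosure.mk_succ_pow (K := Polynomial k) (p := p) (t - 1) γ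
  rw [h6] at h7
  have h8 : PerfectClosure.mk (Polynomial k) p (t - 1, γ) = α := by
    rw [← hβ, hγ, ← h7]
  exact Nat.find_min hP (by omega : t - 1 < t) ⟨γ, h8⟩
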